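/- Let $V$ be a finite-dimensional vector space, $\mathfrak{g}$ a Lie algebra with basis split as before into $\{e_a\}$ and $\{e_\alpha\}$ ($\mathfrak{h}$ a subalgebra), $G_{ab}$ a symmetric nondegenerate $Ad(H)$-invariant matrix, $\hat\gamma^a$ Clifford generators with $\{\hat\gamma^a,\hat\gamma^b\}=2G^{ab}E$, $\Lambda_\alpha = -\tfrac18 G_{ac}C^a_{\alpha b}[\hat\gamma^b,\hat\gamma^c]$, and define $\Gamma_a = -\tfrac14\Gamma^d_{ba}\hat\gamma^b\hat\gamma_d$ with $\Gamma^a_{bc} = -\tfrac12 C^a_{bc} - \tfrac12 G^{ad}(G_{ec}C^e_{bd}+G_{eb}C^e_{cd})$ and $\Gamma = \hat\gamma^a\Gamma_a$. Then $[\Gamma, \Lambda_\alpha] = C^{\beta}_{a\alpha}\,\hat\gamma^a\Lambda_\beta$ for every $\alpha$. -/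
import Mathlib

open Finset
set_option linter.unusedSectionVars false
set_option linter.unusedVariables false
set_option maxHeartbeats 1000000

namespace Spin19

variable {I J : Type*} [Fintype I] [Fintype J] [DecidableEq I] [DecidableEq J]

/-- lowered structure constants on 𝔪: K x y z = ∑_d G_{dz} C^d_{xy} -/
def Kd (C : (I ⊕ J) → (I ⊕ J) → (I ⊕ J) → ℝ) (G : I → I → ℝ) (x y z : I) : ℝ :=
  ∑ d, G d z * C (Sum.inl x) (Sum.inl y) (Sum.inl d)

def rr (C : (I ⊕ J) → (I ⊕ J) → (I ⊕ J) → ℝ) (α : J) (x v : I) : ℝ :=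
  C (Sum.inl x) (Sum.inr α) (Sum.inl v)

def Krr (C : (I ⊕ J) → (I ⊕ J) → (I ⊕ J) → ℝ) (G : I → I → ℝ) (α : J) (v q : I) : ℝ :=
  ∑ a, G a q * rr C α v a

def Khh (C : (I ⊕ J) → (I ⊕ J) → (I ⊕ J) → ℝ) (G : I → I → ℝ) (β : J) (x y : I) : ℝ :=
  ∑ a, G a y * C (Sum.inr β) (Sum.inl x) (Sum.inl a)

def B1 (C : (I ⊕ J) → (I ⊕ J) → (I ⊕ J) → ℝ) (G : I → I → ℝ) (α : J) (x y z : I) : ℝ :=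
  ∑ v, C (Sum.inl x) (Sum.inl y) (Sum.inl v) * Krr C G α v z

def B2 (C : (I ⊕ J) → (I ⊕ J) → (I ⊕ J) → ℝ) (G : I → I → ℝ) (α : J) (x y z : I) : ℝ :=
  ∑ v, rr C α x v * Kd C G y v z

def SKh (C : (I ⊕ J) → (I ⊕ J) → (I ⊕ J) → ℝ) (G : I → I → ℝ) (α : J) (x y z : I) : ℝ :=
  ∑ β, C (Sum.inl x) (Sum.inr α) (Sum.inr β) * Khh C G β y z

section scalar

variable (C : (I ⊕ J) → (I ⊕ J) → (I ⊕ J) → ℝ) (G : I → I → ℝ) (α : J)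

lemma Kd_antisymm (hanti : ∀ X Y Z, C X Y Z = - C Y X Z) (x y z : I) :
    Kd C G x y z = - Kd C G y x z := by
  unfold Kd
  rw [← Finset.sum_neg_distrib]
  exact Finset.sum_congr rfl fun d _ => by rw [hanti]; ring

lemma Krr_antisymm
    (hAdH : ∀ (b c : I) (β : J), ∑ a, (G a b * C (Sum.inl c) (Sum.inr β) (Sum.inl a)
      + G a c * C (Sum.inl b) (Sum.inr β) (Sum.inl a)) = 0) (v q : I) :
    Krr C G α v q = - Krr C G α q v := by
  have h := hAdH q v α
  rw [Finset.sum_add_distrib] at h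
  unfold Krr rr
  linarith

lemma Khh_antisymm (hanti : ∀ X Y Z, C X Y Z = - C Y X Z)
    (hAdH : ∀ (b c : I) (β : J), ∑ a, (G a b * C (Sum.inl c) (Sum.inr β) (Sum.inl a)
      + G a c * C (Sum.inl b) (Sum.inr β) (Sum.inl a)) = 0) (β : J) (x y : I) :
    Khh C G β x y = - Khh C G β y x := by
  have h := hAdH x y β
  rw [Finset.sum_add_distrib] at h
  have e1 : Khh C G β x y = - ∑ a, G a y * C (Sum.inl x) (Sum.inr β) (Sum.inl a) := by
    unfold Khh
    rw [← Finset.sum_neg_distrib]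
    exact Finset.sum_congr rfl fun a _ => by rw [hanti]; ring
  have e2 : Khh C G β y x = - ∑ a, G a x * C (Sum.inl y) (Sum.inr β) (Sum.inl a) := by
    unfold Khh
    rw [← Finset.sum_neg_distrib]
    exact Finset.sum_congr rfl fun a _ => by rw [hanti]; ring
  rw [e1, e2]; linarith

lemma SKh_antisymm23 (hanti : ∀ X Y Z, C X Y Z = - C Y X Z)
    (hAdH : ∀ (b c : I) (β : J), ∑ a, (G a b * C (Sum.inl c) (Sum.inr β) (Sum.inl a)
      + G a c * C (Sum.inl b) (Sum.inr β) (Sum.inl a)) = 0) (x y z : I) :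
    SKh C G α x y z = - SKh C G α x z y := by
  unfold SKh
  rw [← Finset.sum_neg_distrib]
  exact Finset.sum_congr rfl fun β _ => by
    rw [Khh_antisymm C G hanti hAdH β y z]; ring

/-- shape conversion: ∑ r x v * Kd v y z = - B2 x y z -/
lemma conv1 (hanti : ∀ X Y Z, C X Y Z = - C Y X Z) (x y z : I) :
    ∑ v, rr C α x v * Kd C G v y z = - B2 C G α x y z := by
  unfold B2
  rw [← Finset.sum_neg_distrib]
  exact Finset.sum_congr rfl fun v _ => by
    rw [Kd_antisymm C G hanti v y z]; ring

/-- shape conversion: ∑ r x a * Kd y z a = - B1 y z x -/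
lemma conv2 (hGsym : ∀ a b, G a b = G b a)
    (hAdH : ∀ (b c : I) (β : J), ∑ a, (G a b * C (Sum.inl c) (Sum.inr β) (Sum.inl a)
      + G a c * C (Sum.inl b) (Sum.inr β) (Sum.inl a)) = 0) (x y z : I) :
    ∑ a, rr C α x a * Kd C G y z a = - B1 C G α y z x := by
  have step1 : ∑ a, rr C α x a * Kd C G y z a
      = ∑ d, C (Sum.inl y) (Sum.inl z) (Sum.inl d) * Krr C G α x d := by
    unfold Kd Krr
    calc ∑ a, rr C α x a * ∑ d, G d a * C (Sum.inl y) (Sum.inl z) (Sum.inl d)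
        = ∑ a, ∑ d, rr C α x a * (G d a * C (Sum.inl y) (Sum.inl z) (Sum.inl d)) :=
          Finset.sum_congr rfl fun a _ => Finset.mul_sum _ _ _
      _ = ∑ d, ∑ a, rr C α x a * (G d a * C (Sum.inl y) (Sum.inl z) (Sum.inl d)) :=
          Finset.sum_comm
      _ = ∑ d, C (Sum.inl y) (Sum.inl z) (Sum.inl d) * ∑ a, G a d * rr C α x a := by
          refine Finset.sum_congr rfl fun d _ => ?_
          rw [Finset.mul_sum]
          exact Finset.sum_congr rfl fun a _ => by rw [hGsym a d]; ring
  rw [step1]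
  unfold B1
  rw [← Finset.sum_neg_distrib]
  exact Finset.sum_congr rfl fun d _ => by
    rw [Krr_antisymm C G α hAdH x d]; ring

lemma B1_antisymm (hanti : ∀ X Y Z, C X Y Z = - C Y X Z) (x y z : I) :
    B1 C G α x y z = - B1 C G α y x z := by
  unfold B1
  rw [← Finset.sum_neg_distrib]
  exact Finset.sum_congr rfl fun v _ => by rw [hanti]; ring

lemma dagger (hanti : ∀ X Y Z, C X Y Z = - C Y X Z)
    (hjac : ∀ X Y Z W, ∑ V, (C X Y V * C V Z W + C Y Z V * C V X W
      + C Z X V * C V Y W) = 0)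
    (hsub : ∀ (α β : J) (a : I), C (Sum.inr α) (Sum.inr β) (Sum.inl a) = 0)
    (x y q : I) :
    SKh C G α x y q - SKh C G α y x q
      = B1 C G α x y q - B2 C G α y x q + B2 C G α x y q := by
  have key : ∑ w, G w q * (∑ V, (C (Sum.inl x) (Sum.inl y) V * C V (Sum.inr α) (Sum.inl w)
      + C (Sum.inl y) (Sum.inr α) V * C V (Sum.inl x) (Sum.inl w)
      + C (Sum.inr α) (Sum.inl x) V * C V (Sum.inl y) (Sum.inl w))) = 0 :=
    Finset.sum_eq_zero fun w _ => by
      rw [hjac (Sum.inl x) (Sum.inl y) (Sum.inr α) (Sum.inl w), mul_zero]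
  have e0 : ∑ w, G w q * (∑ V, (C (Sum.inl x) (Sum.inl y) V * C V (Sum.inr α) (Sum.inl w)
      + C (Sum.inl y) (Sum.inr α) V * C V (Sum.inl x) (Sum.inl w)
      + C (Sum.inr α) (Sum.inl x) V * C V (Sum.inl y) (Sum.inl w)))
      = (∑ w, G w q * ∑ v : I, (C (Sum.inl x) (Sum.inl y) (Sum.inl v) * C (Sum.inl v) (Sum.inr α) (Sum.inl w)
          + C (Sum.inl y) (Sum.inr α) (Sum.inl v) * C (Sum.inl v) (Sum.inl x) (Sum.inl w)
          + C (Sum.inr α) (Sum.inl x) (Sum.inl v) * C (Sum.inl v) (Sum.inl y) (Sum.inl w)))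
      + (∑ w, G w q * ∑ β : J, (C (Sum.inl x) (Sum.inl y) (Sum.inr β) * C (Sum.inr β) (Sum.inr α) (Sum.inl w)
          + C (Sum.inl y) (Sum.inr α) (Sum.inr β) * C (Sum.inr β) (Sum.inl x) (Sum.inl w)
          + C (Sum.inr α) (Sum.inl x) (Sum.inr β) * C (Sum.inr β) (Sum.inl y) (Sum.inl w))) := by
    rw [← Finset.sum_add_distrib]
    refine Finset.sum_congr rfl fun w _ => ?_
    rw [Fintype.sum_sum_type, mul_add]
  have TI : ∑ w, G w q * ∑ v : I, (C (Sum.inl x) (Sum.inl y) (Sum.inl v) * C (Sum.inl v) (Sum.inr α) (Sum.inl w)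
          + C (Sum.inl y) (Sum.inr α) (Sum.inl v) * C (Sum.inl v) (Sum.inl x) (Sum.inl w)
          + C (Sum.inr α) (Sum.inl x) (Sum.inl v) * C (Sum.inl v) (Sum.inl y) (Sum.inl w))
      = B1 C G α x y q - B2 C G α y x q + B2 C G α x y q := by
    have swap : ∑ w, G w q * ∑ v : I, (C (Sum.inl x) (Sum.inl y) (Sum.inl v) * C (Sum.inl v) (Sum.inr α) (Sum.inl w)
          + C (Sum.inl y) (Sum.inr α) (Sum.inl v) * C (Sum.inl v) (Sum.inl x) (Sum.inl w)
          + C (Sum.inr α) (Sum.inl x) (Sum.inl v) * C (Sum.inl v) (Sum.inl y) (Sum.inl w))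
        = ∑ v, (C (Sum.inl x) (Sum.inl y) (Sum.inl v) * Krr C G α v q
          + (C (Sum.inl y) (Sum.inr α) (Sum.inl v) * Kd C G v x q
          + C (Sum.inr α) (Sum.inl x) (Sum.inl v) * Kd C G v y q)) := by
      calc ∑ w, G w q * ∑ v : I, (C (Sum.inl x) (Sum.inl y) (Sum.inl v) * C (Sum.inl v) (Sum.inr α) (Sum.inl w)
          + C (Sum.inl y) (Sum.inr α) (Sum.inl v) * C (Sum.inl v) (Sum.inl x) (Sum.inl w)
          + C (Sum.inr α) (Sum.inl x) (Sum.inl v) * C (Sum.inl v) (Sum.inl y) (Sum.inl w))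
          = ∑ w, ∑ v, (C (Sum.inl x) (Sum.inl y) (Sum.inl v) * (G w q * C (Sum.inl v) (Sum.inr α) (Sum.inl w))
            + (C (Sum.inl y) (Sum.inr α) (Sum.inl v) * (G w q * C (Sum.inl v) (Sum.inl x) (Sum.inl w))
            + C (Sum.inr α) (Sum.inl x) (Sum.inl v) * (G w q * C (Sum.inl v) (Sum.inl y) (Sum.inl w)))) := by
            refine Finset.sum_congr rfl fun w _ => ?_
            rw [Finset.mul_sum]
            exact Finset.sum_congr rfl fun v _ => by ring
        _ = ∑ v, ∑ w, (C (Sum.inl x) (Sum.inl y) (Sum.inl v) * (G w q * C (Sum.inl v) (Sum.inr α) (Sum.inl w))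
            + (C (Sum.inl y) (Sum.inr α) (Sum.inl v) * (G w q * C (Sum.inl v) (Sum.inl x) (Sum.inl w))
            + C (Sum.inr α) (Sum.inl x) (Sum.inl v) * (G w q * C (Sum.inl v) (Sum.inl y) (Sum.inl w)))) :=
            Finset.sum_comm
        _ = ∑ v, (C (Sum.inl x) (Sum.inl y) (Sum.inl v) * Krr C G α v q
            + (C (Sum.inl y) (Sum.inr α) (Sum.inl v) * Kd C G v x q
            + C (Sum.inr α) (Sum.inl x) (Sum.inl v) * Kd C G v y q)) := by
            refine Finset.sum_congr rfl fun v _ => ?_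
            unfold Krr Kd rr
            rw [Finset.sum_add_distrib, Finset.sum_add_distrib,
              ← Finset.mul_sum, ← Finset.mul_sum, ← Finset.mul_sum]
    rw [swap, Finset.sum_add_distrib, Finset.sum_add_distrib]
    have t1 : ∑ v, C (Sum.inl x) (Sum.inl y) (Sum.inl v) * Krr C G α v q = B1 C G α x y q := rfl
    have t2 : ∑ v, C (Sum.inl y) (Sum.inr α) (Sum.inl v) * Kd C G v x q = - B2 C G α y x q :=
      conv1 C G α hanti y x q
    have t3 : ∑ v, C (Sum.inr α) (Sum.inl x) (Sum.inl v) * Kd C G v y q = B2 C G α x y q := by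
      have e : ∑ v, C (Sum.inr α) (Sum.inl x) (Sum.inl v) * Kd C G v y q
          = - ∑ v, rr C α x v * Kd C G v y q := by
        rw [← Finset.sum_neg_distrib]
        exact Finset.sum_congr rfl fun v _ => by
          rw [hanti (Sum.inr α) (Sum.inl x) (Sum.inl v)]; unfold rr; ring
      rw [e, conv1 C G α hanti x y q]; ring
    rw [t1, t2, t3]; ring
  have TJ : ∑ w, G w q * ∑ β : J, (C (Sum.inl x) (Sum.inl y) (Sum.inr β) * C (Sum.inr β) (Sum.inr α) (Sum.inl w)
          + C (Sum.inl y) (Sum.inr α) (Sum.inr β) * C (Sum.inr β) (Sum.inl x) (Sum.inl w)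
          + C (Sum.inr α) (Sum.inl x) (Sum.inr β) * C (Sum.inr β) (Sum.inl y) (Sum.inl w))
      = SKh C G α y x q - SKh C G α x y q := by
    have swap : ∑ w, G w q * ∑ β : J, (C (Sum.inl x) (Sum.inl y) (Sum.inr β) * C (Sum.inr β) (Sum.inr α) (Sum.inl w)
          + C (Sum.inl y) (Sum.inr α) (Sum.inr β) * C (Sum.inr β) (Sum.inl x) (Sum.inl w)
          + C (Sum.inr α) (Sum.inl x) (Sum.inr β) * C (Sum.inr β) (Sum.inl y) (Sum.inl w))
        = ∑ β : J, (C (Sum.inl y) (Sum.inr α) (Sum.inr β) * Khh C G β x q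
          + C (Sum.inr α) (Sum.inl x) (Sum.inr β) * Khh C G β y q) := by
      calc ∑ w, G w q * ∑ β : J, (C (Sum.inl x) (Sum.inl y) (Sum.inr β) * C (Sum.inr β) (Sum.inr α) (Sum.inl w)
          + C (Sum.inl y) (Sum.inr α) (Sum.inr β) * C (Sum.inr β) (Sum.inl x) (Sum.inl w)
          + C (Sum.inr α) (Sum.inl x) (Sum.inr β) * C (Sum.inr β) (Sum.inl y) (Sum.inl w))
          = ∑ w, ∑ β : J, (C (Sum.inl y) (Sum.inr α) (Sum.inr β) * (G w q * C (Sum.inr β) (Sum.inl x) (Sum.inl w))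
            + C (Sum.inr α) (Sum.inl x) (Sum.inr β) * (G w q * C (Sum.inr β) (Sum.inl y) (Sum.inl w))) := by
            refine Finset.sum_congr rfl fun w _ => ?_
            rw [Finset.mul_sum]
            exact Finset.sum_congr rfl fun β _ => by rw [hsub β α w]; ring
        _ = ∑ β : J, ∑ w, (C (Sum.inl y) (Sum.inr α) (Sum.inr β) * (G w q * C (Sum.inr β) (Sum.inl x) (Sum.inl w))
            + C (Sum.inr α) (Sum.inl x) (Sum.inr β) * (G w q * C (Sum.inr β) (Sum.inl y) (Sum.inl w))) :=
            Finset.sum_comm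
        _ = ∑ β : J, (C (Sum.inl y) (Sum.inr α) (Sum.inr β) * Khh C G β x q
            + C (Sum.inr α) (Sum.inl x) (Sum.inr β) * Khh C G β y q) := by
            refine Finset.sum_congr rfl fun β _ => ?_
            unfold Khh
            rw [Finset.sum_add_distrib, ← Finset.mul_sum, ← Finset.mul_sum]
    rw [swap, Finset.sum_add_distrib]
    have t1 : ∑ β : J, C (Sum.inl y) (Sum.inr α) (Sum.inr β) * Khh C G β x q
        = SKh C G α y x q := rfl
    have t2 : ∑ β : J, C (Sum.inr α) (Sum.inl x) (Sum.inr β) * Khh C G β y q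
        = - SKh C G α x y q := by
      unfold SKh
      rw [← Finset.sum_neg_distrib]
      exact Finset.sum_congr rfl fun β _ => by
        rw [hanti (Sum.inr α) (Sum.inl x) (Sum.inr β)]; ring
    rw [t1, t2]; ring
  rw [e0, TI, TJ] at key
  linarith

lemma conv0 (x y z : I) :
    ∑ a, rr C α x a * Kd C G y a z = B2 C G α x y z := rfl

lemma Tprime_eq (Ginv : I → I → ℝ) (hGsym : ∀ a b, G a b = G b a)
    (hGinv : ∀ a b, ∑ c, G a c * Ginv c b = if a = b then 1 else 0)
    (Γc : I → I → I → ℝ)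
    (hΓc : ∀ a b c, Γc a b c = -(1/2) * C (Sum.inl b) (Sum.inl c) (Sum.inl a)
      - (1/2) * ∑ d, ∑ e, Ginv a d *
        (G e c * C (Sum.inl b) (Sum.inl d) (Sum.inl e)
          + G e b * C (Sum.inl c) (Sum.inl d) (Sum.inl e)))
    (a b e : I) :
    (∑ d, (-(1/4) * Γc d b a * G d e))
      = (1/8) * (Kd C G b a e + (Kd C G b e a + Kd C G a e b)) := by
  have W : ∑ d, G d e * ∑ d', ∑ e', Ginv d d' *
        (G e' a * C (Sum.inl b) (Sum.inl d') (Sum.inl e')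
          + G e' b * C (Sum.inl a) (Sum.inl d') (Sum.inl e'))
      = Kd C G b e a + Kd C G a e b := by
    calc ∑ d, G d e * ∑ d', ∑ e', Ginv d d' *
          (G e' a * C (Sum.inl b) (Sum.inl d') (Sum.inl e')
            + G e' b * C (Sum.inl a) (Sum.inl d') (Sum.inl e'))
        = ∑ d, ∑ d', ∑ e', G d e * (Ginv d d' *
            (G e' a * C (Sum.inl b) (Sum.inl d') (Sum.inl e')
              + G e' b * C (Sum.inl a) (Sum.inl d') (Sum.inl e'))) := by
          refine Finset.sum_congr rfl fun d _ => ?_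
          rw [Finset.mul_sum]
          exact Finset.sum_congr rfl fun d' _ => by rw [Finset.mul_sum]
      _ = ∑ d', ∑ e', ∑ d, G d e * (Ginv d d' *
            (G e' a * C (Sum.inl b) (Sum.inl d') (Sum.inl e')
              + G e' b * C (Sum.inl a) (Sum.inl d') (Sum.inl e'))) := by
          rw [Finset.sum_comm]
          exact Finset.sum_congr rfl fun d' _ => Finset.sum_comm
      _ = ∑ d', ∑ e', (∑ d, G e d * Ginv d d') *
            (G e' a * C (Sum.inl b) (Sum.inl d') (Sum.inl e')
              + G e' b * C (Sum.inl a) (Sum.inl d') (Sum.inl e')) := by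
          refine Finset.sum_congr rfl fun d' _ => Finset.sum_congr rfl fun e' _ => ?_
          rw [Finset.sum_mul]
          exact Finset.sum_congr rfl fun d _ => by rw [hGsym d e]; ring
      _ = ∑ d', ∑ e', (if e = d' then (1:ℝ) else 0) *
            (G e' a * C (Sum.inl b) (Sum.inl d') (Sum.inl e')
              + G e' b * C (Sum.inl a) (Sum.inl d') (Sum.inl e')) := by
          refine Finset.sum_congr rfl fun d' _ => Finset.sum_congr rfl fun e' _ => ?_
          rw [hGinv e d']
      _ = ∑ d', (if e = d' then (∑ e', (G e' a * C (Sum.inl b) (Sum.inl d') (Sum.inl e')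
              + G e' b * C (Sum.inl a) (Sum.inl d') (Sum.inl e'))) else 0) := by
          refine Finset.sum_congr rfl fun d' _ => ?_
          rw [← Finset.mul_sum, ite_mul, one_mul, zero_mul]
      _ = ∑ e', (G e' a * C (Sum.inl b) (Sum.inl e) (Sum.inl e')
              + G e' b * C (Sum.inl a) (Sum.inl e) (Sum.inl e')) := by
          rw [Finset.sum_ite_eq]; simp
      _ = Kd C G b e a + Kd C G a e b := Finset.sum_add_distrib
  calc ∑ d, (-(1/4) * Γc d b a * G d e)
      = ∑ d, ((1/8) * (G d e * C (Sum.inl b) (Sum.inl a) (Sum.inl d))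
          + (1/8) * (G d e * ∑ d', ∑ e', Ginv d d' *
            (G e' a * C (Sum.inl b) (Sum.inl d') (Sum.inl e')
              + G e' b * C (Sum.inl a) (Sum.inl d') (Sum.inl e')))) := by
        refine Finset.sum_congr rfl fun d _ => ?_
        rw [hΓc d b a]; ring
    _ = (1/8) * (∑ d, G d e * C (Sum.inl b) (Sum.inl a) (Sum.inl d))
        + (1/8) * (∑ d, G d e * ∑ d', ∑ e', Ginv d d' *
            (G e' a * C (Sum.inl b) (Sum.inl d') (Sum.inl e')
              + G e' b * C (Sum.inl a) (Sum.inl d') (Sum.inl e'))) := by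
        rw [Finset.sum_add_distrib, ← Finset.mul_sum, ← Finset.mul_sum]
    _ = (1/8) * Kd C G b a e
        + (1/8) * (Kd C G b e a + Kd C G a e b) := by
        rw [W]; rfl
    _ = (1/8) * (Kd C G b a e + (Kd C G b e a + Kd C G a e b)) := by ring

lemma keyScalar (Ginv : I → I → ℝ)
    (hanti : ∀ X Y Z, C X Y Z = - C Y X Z)
    (hjac : ∀ X Y Z W, ∑ V, (C X Y V * C V Z W + C Y Z V * C V X W
      + C Z X V * C V Y W) = 0)
    (hsub : ∀ (α β : J) (a : I), C (Sum.inr α) (Sum.inr β) (Sum.inl a) = 0)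
    (hGsym : ∀ a b, G a b = G b a)
    (hGinv : ∀ a b, ∑ c, G a c * Ginv c b = if a = b then 1 else 0)
    (hAdH : ∀ (b c : I) (β : J), ∑ a, (G a b * C (Sum.inl c) (Sum.inr β) (Sum.inl a)
      + G a c * C (Sum.inl b) (Sum.inr β) (Sum.inl a)) = 0)
    (Γc : I → I → I → ℝ)
    (hΓc : ∀ a b c, Γc a b c = -(1/2) * C (Sum.inl b) (Sum.inl c) (Sum.inl a)
      - (1/2) * ∑ d, ∑ e, Ginv a d *
        (G e c * C (Sum.inl b) (Sum.inl d) (Sum.inl e)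
          + G e b * C (Sum.inl c) (Sum.inl d) (Sum.inl e)))
    (p q r : I) :
    (∑ a, (∑ d, (-(1/4) * Γc d q a * G d r)) * C (Sum.inr α) (Sum.inl p) (Sum.inl a))
    + (∑ a, (∑ d, (-(1/4) * Γc d a p * G d r)) * C (Sum.inr α) (Sum.inl q) (Sum.inl a))
    + (∑ a, (∑ d, (-(1/4) * Γc d q p * G d a)) * C (Sum.inr α) (Sum.inl r) (Sum.inl a))
    = ∑ β, C (Sum.inl p) (Sum.inr α) (Sum.inr β) *
        ((∑ a, -(1/8) * G a r * C (Sum.inr β) (Sum.inl q) (Sum.inl a))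
          - (∑ a, -(1/8) * G a q * C (Sum.inr β) (Sum.inl r) (Sum.inl a))) := by
  have hT := Tprime_eq C G Ginv hGsym hGinv Γc hΓc
  have s1 : (∑ a, (∑ d, (-(1/4) * Γc d q a * G d r)) * C (Sum.inr α) (Sum.inl p) (Sum.inl a))
      = (-(1/8)) * (B2 C G α p q r + (- B1 C G α q r p + - B2 C G α p r q)) := by
    calc (∑ a, (∑ d, (-(1/4) * Γc d q a * G d r)) * C (Sum.inr α) (Sum.inl p) (Sum.inl a))
        = ∑ a, (-(1/8)) * (rr C α p a * Kd C G q a r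
            + (rr C α p a * Kd C G q r a + rr C α p a * Kd C G a r q)) := by
          refine Finset.sum_congr rfl fun a _ => ?_
          rw [hT a q r, hanti (Sum.inr α) (Sum.inl p) (Sum.inl a)]
          unfold rr; ring
      _ = (-(1/8)) * ((∑ a, rr C α p a * Kd C G q a r)
            + ((∑ a, rr C α p a * Kd C G q r a) + (∑ a, rr C α p a * Kd C G a r q))) := by
          rw [← Finset.mul_sum, Finset.sum_add_distrib, Finset.sum_add_distrib]
      _ = (-(1/8)) * (B2 C G α p q r + (- B1 C G α q r p + - B2 C G α p r q)) := by
          rw [conv0 C G α p q r, conv2 C G α hGsym hAdH p q r, conv1 C G α hanti p r q]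
  have s2 : (∑ a, (∑ d, (-(1/4) * Γc d a p * G d r)) * C (Sum.inr α) (Sum.inl q) (Sum.inl a))
      = (-(1/8)) * (- B2 C G α q p r + (- B2 C G α q r p + - B1 C G α p r q)) := by
    calc (∑ a, (∑ d, (-(1/4) * Γc d a p * G d r)) * C (Sum.inr α) (Sum.inl q) (Sum.inl a))
        = ∑ a, (-(1/8)) * (rr C α q a * Kd C G a p r
            + (rr C α q a * Kd C G a r p + rr C α q a * Kd C G p r a)) := by
          refine Finset.sum_congr rfl fun a _ => ?_
          rw [hT p a r, hanti (Sum.inr α) (Sum.inl q) (Sum.inl a)]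
          unfold rr; ring
      _ = (-(1/8)) * ((∑ a, rr C α q a * Kd C G a p r)
            + ((∑ a, rr C α q a * Kd C G a r p) + (∑ a, rr C α q a * Kd C G p r a))) := by
          rw [← Finset.mul_sum, Finset.sum_add_distrib, Finset.sum_add_distrib]
      _ = (-(1/8)) * (- B2 C G α q p r + (- B2 C G α q r p + - B1 C G α p r q)) := by
          rw [conv1 C G α hanti q p r, conv1 C G α hanti q r p,
            conv2 C G α hGsym hAdH q p r]
  have s3 : (∑ a, (∑ d, (-(1/4) * Γc d q p * G d a)) * C (Sum.inr α) (Sum.inl r) (Sum.inl a))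
      = (-(1/8)) * (- B1 C G α q p r + (B2 C G α r q p + B2 C G α r p q)) := by
    calc (∑ a, (∑ d, (-(1/4) * Γc d q p * G d a)) * C (Sum.inr α) (Sum.inl r) (Sum.inl a))
        = ∑ a, (-(1/8)) * (rr C α r a * Kd C G q p a
            + (rr C α r a * Kd C G q a p + rr C α r a * Kd C G p a q)) := by
          refine Finset.sum_congr rfl fun a _ => ?_
          rw [hT p q a, hanti (Sum.inr α) (Sum.inl r) (Sum.inl a)]
          unfold rr; ring
      _ = (-(1/8)) * ((∑ a, rr C α r a * Kd C G q p a)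
            + ((∑ a, rr C α r a * Kd C G q a p) + (∑ a, rr C α r a * Kd C G p a q))) := by
          rw [← Finset.mul_sum, Finset.sum_add_distrib, Finset.sum_add_distrib]
      _ = (-(1/8)) * (- B1 C G α q p r + (B2 C G α r q p + B2 C G α r p q)) := by
          rw [conv2 C G α hGsym hAdH r q p, conv0 C G α r q p, conv0 C G α r p q]
  have hR : (∑ β, C (Sum.inl p) (Sum.inr α) (Sum.inr β) *
        ((∑ a, -(1/8) * G a r * C (Sum.inr β) (Sum.inl q) (Sum.inl a))
          - (∑ a, -(1/8) * G a q * C (Sum.inr β) (Sum.inl r) (Sum.inl a))))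
      = (1/8) * SKh C G α p r q - (1/8) * SKh C G α p q r := by
    calc (∑ β, C (Sum.inl p) (Sum.inr α) (Sum.inr β) *
        ((∑ a, -(1/8) * G a r * C (Sum.inr β) (Sum.inl q) (Sum.inl a))
          - (∑ a, -(1/8) * G a q * C (Sum.inr β) (Sum.inl r) (Sum.inl a))))
        = ∑ β, ((1/8) * (C (Sum.inl p) (Sum.inr α) (Sum.inr β) * Khh C G β r q)
            - (1/8) * (C (Sum.inl p) (Sum.inr α) (Sum.inr β) * Khh C G β q r)) := by
          refine Finset.sum_congr rfl fun β _ => ?_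
          have e1 : ∑ a, -(1/8) * G a r * C (Sum.inr β) (Sum.inl q) (Sum.inl a)
              = -(1/8) * Khh C G β q r := by
            unfold Khh
            rw [Finset.mul_sum]
            exact Finset.sum_congr rfl fun a _ => by ring
          have e2 : ∑ a, -(1/8) * G a q * C (Sum.inr β) (Sum.inl r) (Sum.inl a)
              = -(1/8) * Khh C G β r q := by
            unfold Khh
            rw [Finset.mul_sum]
            exact Finset.sum_congr rfl fun a _ => by ring
          rw [e1, e2]; ring
      _ = (1/8) * SKh C G α p r q - (1/8) * SKh C G α p q r := by
          rw [Finset.sum_sub_distrib, ← Finset.mul_sum, ← Finset.mul_sum]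
          rfl
  rw [s1, s2, s3, hR]
  have h7a := dagger C G α hanti hjac hsub p r q
  have h7b := dagger C G α hanti hjac hsub q p r
  have h7c := dagger C G α hanti hjac hsub r q p
  have h8a := SKh_antisymm23 C G α hanti hAdH q p r
  have h8c := SKh_antisymm23 C G α hanti hAdH r q p
  have h6 := B1_antisymm C G α hanti q r p
  linear_combination (-(1/8)) * h7a + (-(1/8)) * h7b + (1/8) * h7c
    + (1/8) * h8a + (-(1/8)) * h8c + (1/8) * h6

end scalar

variable {A : Type*} [Ring A] [Algebra ℝ A]

lemma gg_comm (Ginv : I → I → ℝ) (γ : I → A)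
    (hCl : ∀ a b, γ a * γ b + γ b * γ a = (2 * Ginv a b) • (1 : A)) (b c x : I) :
    (γ b * γ c) * γ x - γ x * (γ b * γ c)
      = (2 * Ginv c x) • γ b - (2 * Ginv b x) • γ c := by
  have hcx : γ c * γ x = (2 * Ginv c x) • (1 : A) - γ x * γ c :=
    eq_sub_of_add_eq (hCl c x)
  have hbx : γ b * γ x = (2 * Ginv b x) • (1 : A) - γ x * γ b :=
    eq_sub_of_add_eq (hCl b x)
  have key : (γ b * γ c) * γ x
      = (2 * Ginv c x) • γ b - (2 * Ginv b x) • γ c + γ x * (γ b * γ c) := by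
    rw [mul_assoc, hcx, mul_sub, mul_smul_comm, mul_one, ← mul_assoc, hbx,
      sub_mul, smul_mul_assoc, one_mul, ← mul_assoc]
    abel
  rw [key]; abel

lemma comm_sum3 (t : I → I → I → ℝ) (m : I → I → I → A) (y : A) :
    y * (∑ a, ∑ b, ∑ c, t a b c • m a b c)
      - (∑ a, ∑ b, ∑ c, t a b c • m a b c) * y
    = ∑ a, ∑ b, ∑ c, t a b c • (y * m a b c - m a b c * y) := by
  rw [Finset.mul_sum, Finset.sum_mul, ← Finset.sum_sub_distrib]
  refine Finset.sum_congr rfl fun a _ => ?_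
  rw [Finset.mul_sum, Finset.sum_mul, ← Finset.sum_sub_distrib]
  refine Finset.sum_congr rfl fun b _ => ?_
  rw [Finset.mul_sum, Finset.sum_mul, ← Finset.sum_sub_distrib]
  refine Finset.sum_congr rfl fun c _ => ?_
  rw [mul_smul_comm, smul_mul_assoc, ← smul_sub]

lemma collect3_mid (s : I → I → I → ℝ) (γ : I → A) :
    ∑ a, ∑ b, ∑ c, s a b c • γ b = ∑ b, (∑ a, ∑ c, s a b c) • γ b := by
  rw [Finset.sum_comm]
  refine Finset.sum_congr rfl fun b _ => ?_
  rw [Finset.sum_smul]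
  refine Finset.sum_congr rfl fun a _ => ?_
  rw [Finset.sum_smul]

lemma collect3_last (s : I → I → I → ℝ) (γ : I → A) :
    ∑ a, ∑ b, ∑ c, s a b c • γ c = ∑ c, (∑ a, ∑ b, s a b c) • γ c := by
  have h : ∀ a : I, ∑ b, ∑ c, s a b c • γ c = ∑ c, (∑ b, s a b c) • γ c := by
    intro a
    rw [Finset.sum_comm]
    exact Finset.sum_congr rfl fun c _ => (Finset.sum_smul).symm
  calc ∑ a, ∑ b, ∑ c, s a b c • γ c = ∑ a, ∑ c, (∑ b, s a b c) • γ c :=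
        Finset.sum_congr rfl fun a _ => h a
    _ = ∑ c, ∑ a, (∑ b, s a b c) • γ c := Finset.sum_comm
    _ = ∑ c, (∑ a, ∑ b, s a b c) • γ c :=
        Finset.sum_congr rfl fun c _ => (Finset.sum_smul).symm

section star
variable (C : (I ⊕ J) → (I ⊕ J) → (I ⊕ J) → ℝ) (G Ginv : I → I → ℝ) (α : J)

/-- derived AdH relation -/
lemma adh' (hanti : ∀ X Y Z, C X Y Z = - C Y X Z)
    (hAdH : ∀ (b c : I) (β : J), ∑ a, (G a b * C (Sum.inl c) (Sum.inr β) (Sum.inl a)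
      + G a c * C (Sum.inl b) (Sum.inr β) (Sum.inl a)) = 0) (b c : I) :
    ∑ a, G a c * C (Sum.inr α) (Sum.inl b) (Sum.inl a)
      = - ∑ a, G a b * C (Sum.inr α) (Sum.inl c) (Sum.inl a) := by
  have h := hAdH b c α
  rw [Finset.sum_add_distrib] at h
  have e1 : ∑ a, G a c * C (Sum.inr α) (Sum.inl b) (Sum.inl a)
      = - ∑ a, G a c * C (Sum.inl b) (Sum.inr α) (Sum.inl a) := by
    rw [← Finset.sum_neg_distrib]
    exact Finset.sum_congr rfl fun a _ => by rw [hanti (Sum.inr α) (Sum.inl b)]; ring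
  have e2 : ∑ a, G a b * C (Sum.inr α) (Sum.inl c) (Sum.inl a)
      = - ∑ a, G a b * C (Sum.inl c) (Sum.inr α) (Sum.inl a) := by
    rw [← Finset.sum_neg_distrib]
    exact Finset.sum_congr rfl fun a _ => by rw [hanti (Sum.inr α) (Sum.inl c)]; ring
  rw [e1, e2]; linarith

lemma star_comm (γ : I → A)
    (hCl : ∀ a b, γ a * γ b + γ b * γ a = (2 * Ginv a b) • (1 : A))
    (Λ : J → A)
    (hΛ : ∀ α, Λ α = ∑ a, ∑ b, ∑ c,
      (-(1/8) * G a c * C (Sum.inr α) (Sum.inl b) (Sum.inl a)) •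
        (γ b * γ c - γ c * γ b))
    (hanti : ∀ X Y Z, C X Y Z = - C Y X Z)
    (hGsym : ∀ a b, G a b = G b a)
    (hGinv : ∀ a b, ∑ c, G a c * Ginv c b = if a = b then 1 else 0)
    (hAdH : ∀ (b c : I) (β : J), ∑ a, (G a b * C (Sum.inl c) (Sum.inr β) (Sum.inl a)
      + G a c * C (Sum.inl b) (Sum.inr β) (Sum.inl a)) = 0)
    (x : I) :
    γ x * Λ α - Λ α * γ x
      = ∑ f, C (Sum.inr α) (Sum.inl f) (Sum.inl x) • γ f := by
  rw [hΛ α, comm_sum3]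
  have mcomm : ∀ b c : I, γ x * (γ b * γ c - γ c * γ b) - (γ b * γ c - γ c * γ b) * γ x
      = (4 * Ginv b x) • γ c - (4 * Ginv c x) • γ b := by
    intro b c
    have h1 := gg_comm Ginv γ hCl b c x
    have h2 := gg_comm Ginv γ hCl c b x
    have e : γ x * (γ b * γ c - γ c * γ b) - (γ b * γ c - γ c * γ b) * γ x
        = -((γ b * γ c) * γ x - γ x * (γ b * γ c))
          + ((γ c * γ b) * γ x - γ x * (γ c * γ b)) := by noncomm_ring
    rw [e, h1, h2]
    module
  have expand : ∑ a, ∑ b, ∑ c, (-(1/8) * G a c * C (Sum.inr α) (Sum.inl b) (Sum.inl a)) •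
        (γ x * (γ b * γ c - γ c * γ b) - (γ b * γ c - γ c * γ b) * γ x)
      = (∑ a, ∑ b, ∑ c,
          ((-(1/8) * G a c * C (Sum.inr α) (Sum.inl b) (Sum.inl a)) * (4 * Ginv b x)) • γ c)
        - (∑ a, ∑ b, ∑ c,
          ((-(1/8) * G a c * C (Sum.inr α) (Sum.inl b) (Sum.inl a)) * (4 * Ginv c x)) • γ b) := by
    rw [← Finset.sum_sub_distrib]
    refine Finset.sum_congr rfl fun a _ => ?_
    rw [← Finset.sum_sub_distrib]
    refine Finset.sum_congr rfl fun b _ => ?_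
    rw [← Finset.sum_sub_distrib]
    refine Finset.sum_congr rfl fun c _ => ?_
    rw [mcomm b c, smul_sub, smul_smul, smul_smul]
  rw [expand, collect3_last, collect3_mid]
  have sC : ∀ c : I, (∑ a, ∑ b,
      ((-(1/8) * G a c * C (Sum.inr α) (Sum.inl b) (Sum.inl a)) * (4 * Ginv b x)))
      = (1/2) * C (Sum.inr α) (Sum.inl c) (Sum.inl x) := by
    intro c
    calc ∑ a, ∑ b, ((-(1/8) * G a c * C (Sum.inr α) (Sum.inl b) (Sum.inl a)) * (4 * Ginv b x))
        = ∑ b, ∑ a, ((-(1/8) * G a c * C (Sum.inr α) (Sum.inl b) (Sum.inl a)) * (4 * Ginv b x)) :=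
          Finset.sum_comm
      _ = ∑ b, (-(1/2) * Ginv b x) * ∑ a, G a c * C (Sum.inr α) (Sum.inl b) (Sum.inl a) := by
          refine Finset.sum_congr rfl fun b _ => ?_
          rw [Finset.mul_sum]
          exact Finset.sum_congr rfl fun a _ => by ring
      _ = ∑ b, ((1/2) * Ginv b x) * ∑ a, G a b * C (Sum.inr α) (Sum.inl c) (Sum.inl a) := by
          refine Finset.sum_congr rfl fun b _ => ?_
          rw [adh' C G α hanti hAdH b c]
          ring
      _ = ∑ b, ∑ a, ((1/2) * C (Sum.inr α) (Sum.inl c) (Sum.inl a)) * (G a b * Ginv b x) := by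
          refine Finset.sum_congr rfl fun b _ => ?_
          rw [Finset.mul_sum]
          exact Finset.sum_congr rfl fun a _ => by ring
      _ = ∑ a, ((1/2) * C (Sum.inr α) (Sum.inl c) (Sum.inl a)) * ∑ b, G a b * Ginv b x := by
          rw [Finset.sum_comm]
          exact Finset.sum_congr rfl fun a _ => (Finset.mul_sum _ _ _).symm
      _ = ∑ a, (if a = x then (1/2) * C (Sum.inr α) (Sum.inl c) (Sum.inl a) else 0) := by
          refine Finset.sum_congr rfl fun a _ => ?_
          rw [hGinv a x, mul_ite, mul_one, mul_zero]
      _ = (1/2) * C (Sum.inr α) (Sum.inl c) (Sum.inl x) := by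
          rw [Finset.sum_ite_eq']; simp
  have sB : ∀ b : I, (∑ a, ∑ c,
      ((-(1/8) * G a c * C (Sum.inr α) (Sum.inl b) (Sum.inl a)) * (4 * Ginv c x)))
      = -(1/2) * C (Sum.inr α) (Sum.inl b) (Sum.inl x) := by
    intro b
    calc ∑ a, ∑ c, ((-(1/8) * G a c * C (Sum.inr α) (Sum.inl b) (Sum.inl a)) * (4 * Ginv c x))
        = ∑ a, (-(1/2) * C (Sum.inr α) (Sum.inl b) (Sum.inl a)) * ∑ c, G a c * Ginv c x := by
          refine Finset.sum_congr rfl fun a _ => ?_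
          rw [Finset.mul_sum]
          exact Finset.sum_congr rfl fun c' _ => by ring
      _ = ∑ a, (if a = x then -(1/2) * C (Sum.inr α) (Sum.inl b) (Sum.inl a) else 0) := by
          refine Finset.sum_congr rfl fun a _ => ?_
          rw [hGinv a x, mul_ite, mul_one, mul_zero]
      _ = -(1/2) * C (Sum.inr α) (Sum.inl b) (Sum.inl x) := by
          rw [Finset.sum_ite_eq']; simp
  calc (∑ c, (∑ a, ∑ b,
          ((-(1/8) * G a c * C (Sum.inr α) (Sum.inl b) (Sum.inl a)) * (4 * Ginv b x))) • γ c)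
        - (∑ b, (∑ a, ∑ c,
          ((-(1/8) * G a c * C (Sum.inr α) (Sum.inl b) (Sum.inl a)) * (4 * Ginv c x))) • γ b)
      = (∑ c, ((1/2) * C (Sum.inr α) (Sum.inl c) (Sum.inl x)) • γ c)
        - (∑ b, (-(1/2) * C (Sum.inr α) (Sum.inl b) (Sum.inl x)) • γ b) := by
        congr 1
        · exact Finset.sum_congr rfl fun c _ => by rw [sC c]
        · exact Finset.sum_congr rfl fun b _ => by rw [sB b]
    _ = ∑ f, C (Sum.inr α) (Sum.inl f) (Sum.inl x) • γ f := by
        rw [← Finset.sum_sub_distrib]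
        refine Finset.sum_congr rfl fun f _ => ?_
        rw [← sub_smul]
        congr 1
        ring
end star

lemma comm_sum3' (t : I → I → I → ℝ) (m : I → I → I → A) (y : A) :
    (∑ a, ∑ b, ∑ c, t a b c • m a b c) * y
      - y * (∑ a, ∑ b, ∑ c, t a b c • m a b c)
    = ∑ a, ∑ b, ∑ c, t a b c • (m a b c * y - y * m a b c) := by
  rw [Finset.sum_mul, Finset.mul_sum, ← Finset.sum_sub_distrib]
  refine Finset.sum_congr rfl fun a _ => ?_
  rw [Finset.sum_mul, Finset.mul_sum, ← Finset.sum_sub_distrib]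
  refine Finset.sum_congr rfl fun b _ => ?_
  rw [Finset.sum_mul, Finset.mul_sum, ← Finset.sum_sub_distrib]
  refine Finset.sum_congr rfl fun c _ => ?_
  rw [mul_smul_comm, smul_mul_assoc, ← smul_sub]

lemma reindex1 {M : Type*} [AddCommMonoid M] (g : I → I → I → I → M) :
    ∑ a, ∑ b, ∑ e, ∑ f, g a b e f = ∑ f, ∑ b, ∑ e, ∑ a, g a b e f := by
  calc ∑ a, ∑ b, ∑ e, ∑ f, g a b e f
      = ∑ a, ∑ f, ∑ b, ∑ e, g a b e f := by
        refine Finset.sum_congr rfl fun a _ => ?_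
        calc ∑ b, ∑ e, ∑ f, g a b e f = ∑ b, ∑ f, ∑ e, g a b e f :=
              Finset.sum_congr rfl fun b _ => Finset.sum_comm
          _ = ∑ f, ∑ b, ∑ e, g a b e f := Finset.sum_comm
    _ = ∑ f, ∑ a, ∑ b, ∑ e, g a b e f := Finset.sum_comm
    _ = ∑ f, ∑ b, ∑ e, ∑ a, g a b e f := by
        refine Finset.sum_congr rfl fun f _ => ?_
        calc ∑ a, ∑ b, ∑ e, g a b e f = ∑ b, ∑ a, ∑ e, g a b e f := Finset.sum_comm
          _ = ∑ b, ∑ e, ∑ a, g a b e f :=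
              Finset.sum_congr rfl fun b _ => Finset.sum_comm

lemma reindex2 {M : Type*} [AddCommMonoid M] (g : I → I → I → I → M) :
    ∑ a, ∑ b, ∑ e, ∑ f, g a b e f = ∑ a, ∑ f, ∑ e, ∑ b, g a b e f := by
  refine Finset.sum_congr rfl fun a _ => ?_
  calc ∑ b, ∑ e, ∑ f, g a b e f = ∑ b, ∑ f, ∑ e, g a b e f :=
        Finset.sum_congr rfl fun b _ => Finset.sum_comm
    _ = ∑ f, ∑ b, ∑ e, g a b e f := Finset.sum_comm
    _ = ∑ f, ∑ e, ∑ b, g a b e f :=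
        Finset.sum_congr rfl fun f _ => Finset.sum_comm

lemma reindex3 {M : Type*} [AddCommMonoid M] (g : I → I → I → I → M) :
    ∑ a, ∑ b, ∑ e, ∑ f, g a b e f = ∑ a, ∑ b, ∑ f, ∑ e, g a b e f :=
  Finset.sum_congr rfl fun a _ => Finset.sum_congr rfl fun b _ => Finset.sum_comm

lemma reindex3s {M : Type*} [AddCommMonoid M] (g : I → I → I → M) :
    ∑ a, ∑ b, ∑ c, g a b c = ∑ b, ∑ c, ∑ a, g a b c := by
  calc ∑ a, ∑ b, ∑ c, g a b c = ∑ b, ∑ a, ∑ c, g a b c := Finset.sum_comm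
    _ = ∑ b, ∑ c, ∑ a, g a b c := Finset.sum_congr rfl fun b _ => Finset.sum_comm

lemma reindexJ {M : Type*} [AddCommMonoid M] (g : J → I → I → M) :
    ∑ β, ∑ q, ∑ r, g β q r = ∑ q, ∑ r, ∑ β, g β q r := by
  calc ∑ β, ∑ q, ∑ r, g β q r = ∑ q, ∑ β, ∑ r, g β q r := Finset.sum_comm
    _ = ∑ q, ∑ r, ∑ β, g β q r := Finset.sum_congr rfl fun q _ => Finset.sum_comm

end Spin19

open Finset

/-- for a real Lie algebra `𝔤 = 𝔪 ⊕ 𝔥` with structure constants `C`,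
an `Ad(H)`-invariant symmetric nondegenerate matrix `G` (inverse `Ginv`), Clifford
generators `γ^a`, spinor generators `Λ_α = -(1/8) G_{ac} C^a_{αb} [γ^b,γ^c]`,
`Γ^a_{bc} = -½C^a_{bc} - ½G^{ad}(G_{ec}C^e_{bd} + G_{eb}C^e_{cd})`,
`Γ_a = -(1/4) Γ^d_{ba} γ^b γ_d` and `Γ = γ^a Γ_a`, one has
`[Γ, Λ_α] = C^β_{aα} γ^a Λ_β`. -/
theorem spin_connection_commutator
    {I J : Type*} [Fintype I] [Fintype J] [DecidableEq I] [DecidableEq J]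
    {A : Type*} [Ring A] [Algebra ℝ A]
    (C : (I ⊕ J) → (I ⊕ J) → (I ⊕ J) → ℝ)
    (hanti : ∀ X Y Z, C X Y Z = - C Y X Z)
    (hjac : ∀ X Y Z W, ∑ V, (C X Y V * C V Z W + C Y Z V * C V X W
      + C Z X V * C V Y W) = 0)
    (hsub : ∀ (α β : J) (a : I), C (Sum.inr α) (Sum.inr β) (Sum.inl a) = 0)
    (G Ginv : I → I → ℝ)
    (hGsym : ∀ a b, G a b = G b a)
    (hGinv : ∀ a b, ∑ c, G a c * Ginv c b = if a = b then 1 else 0)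
    (hGinv' : ∀ a b, ∑ c, Ginv a c * G c b = if a = b then 1 else 0)
    (hAdH : ∀ (b c : I) (α : J), ∑ a, (G a b * C (Sum.inl c) (Sum.inr α) (Sum.inl a)
      + G a c * C (Sum.inl b) (Sum.inr α) (Sum.inl a)) = 0)
    (γ : I → A)
    (hCl : ∀ a b, γ a * γ b + γ b * γ a = (2 * Ginv a b) • (1 : A))
    (Λ : J → A)
    (hΛ : ∀ α, Λ α = ∑ a, ∑ b, ∑ c,
      (-(1/8) * G a c * C (Sum.inr α) (Sum.inl b) (Sum.inl a)) •
        (γ b * γ c - γ c * γ b))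
    (Γc : I → I → I → ℝ)
    (hΓc : ∀ a b c, Γc a b c = -(1/2) * C (Sum.inl b) (Sum.inl c) (Sum.inl a)
      - (1/2) * ∑ d, ∑ e, Ginv a d *
        (G e c * C (Sum.inl b) (Sum.inl d) (Sum.inl e)
          + G e b * C (Sum.inl c) (Sum.inl d) (Sum.inl e)))
    (Γa : I → A)
    (hΓa : ∀ a, Γa a = ∑ b, ∑ d,
      (-(1/4) * Γc d b a) • (γ b * (∑ e, G d e • γ e)))
    (Γt : A)
    (hΓt : Γt = ∑ a, γ a * Γa a) :
    ∀ α : J, Γt * Λ α - Λ α * Γt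
      = ∑ a, ∑ β : J, C (Sum.inl a) (Sum.inr α) (Sum.inr β) • (γ a * Λ β) := by
  intro α
  have hstar : ∀ x : I, γ x * Λ α - Λ α * γ x
      = ∑ f, C (Sum.inr α) (Sum.inl f) (Sum.inl x) • γ f :=
    fun x => Spin19.star_comm C G Ginv α γ hCl Λ hΛ hanti hGsym hGinv hAdH x
  -- Step A : cubic expansion of Γt
  have hmono : ∀ a : I, γ a * Γa a
      = ∑ b, ∑ e, (∑ d, (-(1/4) * Γc d b a * G d e)) • (γ a * (γ b * γ e)) := by
    intro a
    rw [hΓa a]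
    have inner : ∀ b d : I, γ a * ((-(1/4) * Γc d b a) • (γ b * ∑ e, G d e • γ e))
        = ∑ e, (-(1/4) * Γc d b a * G d e) • (γ a * (γ b * γ e)) := by
      intro b d
      have h1 : γ b * ∑ e, G d e • γ e = ∑ e, G d e • (γ b * γ e) := by
        rw [Finset.mul_sum]
        exact Finset.sum_congr rfl fun e _ => mul_smul_comm _ _ _
      rw [h1, mul_smul_comm, Finset.mul_sum, Finset.smul_sum]
      exact Finset.sum_congr rfl fun e _ => by rw [mul_smul_comm, smul_smul]
    calc γ a * ∑ b, ∑ d, (-(1/4) * Γc d b a) • (γ b * ∑ e, G d e • γ e)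
        = ∑ b, ∑ d, ∑ e, (-(1/4) * Γc d b a * G d e) • (γ a * (γ b * γ e)) := by
          rw [Finset.mul_sum]
          refine Finset.sum_congr rfl fun b _ => ?_
          rw [Finset.mul_sum]
          exact Finset.sum_congr rfl fun d _ => inner b d
      _ = ∑ b, ∑ e, (∑ d, (-(1/4) * Γc d b a * G d e)) • (γ a * (γ b * γ e)) := by
          refine Finset.sum_congr rfl fun b _ => ?_
          rw [Finset.sum_comm]
          exact Finset.sum_congr rfl fun e _ => (Finset.sum_smul).symm
  have hΓt3 : Γt = ∑ a, ∑ b, ∑ e,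
      (∑ d, (-(1/4) * Γc d b a * G d e)) • (γ a * (γ b * γ e)) := by
    rw [hΓt]
    exact Finset.sum_congr rfl fun a _ => hmono a
  -- Step C : per-monomial commutator
  have ringid : ∀ u v w L : A, (u * (v * w)) * L - L * (u * (v * w))
      = (u * L - L * u) * (v * w) + (u * ((v * L - L * v) * w)
        + u * (v * (w * L - L * w))) := by
    intros u v w L; noncomm_ring
  have mono : ∀ a b e : I, (γ a * (γ b * γ e)) * Λ α - Λ α * (γ a * (γ b * γ e))
      = ∑ f, (C (Sum.inr α) (Sum.inl f) (Sum.inl a) • (γ f * (γ b * γ e))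
          + (C (Sum.inr α) (Sum.inl f) (Sum.inl b) • (γ a * (γ f * γ e))
          + C (Sum.inr α) (Sum.inl f) (Sum.inl e) • (γ a * (γ b * γ f)))) := by
    intro a b e
    rw [ringid, hstar a, hstar b, hstar e]
    have t1 : (∑ f, C (Sum.inr α) (Sum.inl f) (Sum.inl a) • γ f) * (γ b * γ e)
        = ∑ f, C (Sum.inr α) (Sum.inl f) (Sum.inl a) • (γ f * (γ b * γ e)) := by
      rw [Finset.sum_mul]
      exact Finset.sum_congr rfl fun f _ => smul_mul_assoc _ _ _
    have t2 : γ a * ((∑ f, C (Sum.inr α) (Sum.inl f) (Sum.inl b) • γ f) * γ e)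
        = ∑ f, C (Sum.inr α) (Sum.inl f) (Sum.inl b) • (γ a * (γ f * γ e)) := by
      rw [Finset.sum_mul, Finset.mul_sum]
      exact Finset.sum_congr rfl fun f _ => by
        rw [smul_mul_assoc, mul_smul_comm]
    have t3 : γ a * (γ b * (∑ f, C (Sum.inr α) (Sum.inl f) (Sum.inl e) • γ f))
        = ∑ f, C (Sum.inr α) (Sum.inl f) (Sum.inl e) • (γ a * (γ b * γ f)) := by
      rw [Finset.mul_sum, Finset.mul_sum]
      exact Finset.sum_congr rfl fun f _ => by
        rw [mul_smul_comm, mul_smul_comm]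
    rw [t1, t2, t3, ← Finset.sum_add_distrib, ← Finset.sum_add_distrib]
  -- Step D : expand the commutator
  rw [hΓt3, Spin19.comm_sum3']
  have expand : ∑ a, ∑ b, ∑ e, (∑ d, (-(1/4) * Γc d b a * G d e)) •
        ((γ a * (γ b * γ e)) * Λ α - Λ α * (γ a * (γ b * γ e)))
      = (∑ a, ∑ b, ∑ e, ∑ f, ((∑ d, (-(1/4) * Γc d b a * G d e))
            * C (Sum.inr α) (Sum.inl f) (Sum.inl a)) • (γ f * (γ b * γ e)))
        + ((∑ a, ∑ b, ∑ e, ∑ f, ((∑ d, (-(1/4) * Γc d b a * G d e))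
            * C (Sum.inr α) (Sum.inl f) (Sum.inl b)) • (γ a * (γ f * γ e)))
        + (∑ a, ∑ b, ∑ e, ∑ f, ((∑ d, (-(1/4) * Γc d b a * G d e))
            * C (Sum.inr α) (Sum.inl f) (Sum.inl e)) • (γ a * (γ b * γ f)))) := by
    calc ∑ a, ∑ b, ∑ e, (∑ d, (-(1/4) * Γc d b a * G d e)) •
          ((γ a * (γ b * γ e)) * Λ α - Λ α * (γ a * (γ b * γ e)))
        = ∑ a, ∑ b, ∑ e, ∑ f, (((∑ d, (-(1/4) * Γc d b a * G d e))
              * C (Sum.inr α) (Sum.inl f) (Sum.inl a)) • (γ f * (γ b * γ e))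
            + (((∑ d, (-(1/4) * Γc d b a * G d e))
              * C (Sum.inr α) (Sum.inl f) (Sum.inl b)) • (γ a * (γ f * γ e))
            + ((∑ d, (-(1/4) * Γc d b a * G d e))
              * C (Sum.inr α) (Sum.inl f) (Sum.inl e)) • (γ a * (γ b * γ f)))) := by
          refine Finset.sum_congr rfl fun a _ => Finset.sum_congr rfl fun b _ =>
            Finset.sum_congr rfl fun e _ => ?_
          rw [mono a b e, Finset.smul_sum]
          exact Finset.sum_congr rfl fun f _ => by
            rw [smul_add, smul_add, smul_smul, smul_smul, smul_smul]
      _ = _ := by simp only [Finset.sum_add_distrib]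
  rw [expand]
  -- Step D2 : reindex the three quadruple sums
  have q1 : (∑ a, ∑ b, ∑ e, ∑ f, ((∑ d, (-(1/4) * Γc d b a * G d e))
        * C (Sum.inr α) (Sum.inl f) (Sum.inl a)) • (γ f * (γ b * γ e)))
      = ∑ p, ∑ q, ∑ r, (∑ a, (∑ d, (-(1/4) * Γc d q a * G d r))
          * C (Sum.inr α) (Sum.inl p) (Sum.inl a)) • (γ p * (γ q * γ r)) := by
    rw [Spin19.reindex1]
    exact Finset.sum_congr rfl fun p _ => Finset.sum_congr rfl fun q _ =>
      Finset.sum_congr rfl fun r _ => (Finset.sum_smul).symm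
  have q2 : (∑ a, ∑ b, ∑ e, ∑ f, ((∑ d, (-(1/4) * Γc d b a * G d e))
        * C (Sum.inr α) (Sum.inl f) (Sum.inl b)) • (γ a * (γ f * γ e)))
      = ∑ p, ∑ q, ∑ r, (∑ a, (∑ d, (-(1/4) * Γc d a p * G d r))
          * C (Sum.inr α) (Sum.inl q) (Sum.inl a)) • (γ p * (γ q * γ r)) := by
    rw [Spin19.reindex2]
    exact Finset.sum_congr rfl fun p _ => Finset.sum_congr rfl fun q _ =>
      Finset.sum_congr rfl fun r _ => (Finset.sum_smul).symm
  have q3 : (∑ a, ∑ b, ∑ e, ∑ f, ((∑ d, (-(1/4) * Γc d b a * G d e))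
        * C (Sum.inr α) (Sum.inl f) (Sum.inl e)) • (γ a * (γ b * γ f)))
      = ∑ p, ∑ q, ∑ r, (∑ a, (∑ d, (-(1/4) * Γc d q p * G d a))
          * C (Sum.inr α) (Sum.inl r) (Sum.inl a)) • (γ p * (γ q * γ r)) := by
    rw [Spin19.reindex3]
    exact Finset.sum_congr rfl fun p _ => Finset.sum_congr rfl fun q _ =>
      Finset.sum_congr rfl fun r _ => (Finset.sum_smul).symm
  rw [q1, q2, q3]
  -- Step E : RHS expansion
  have gMul : ∀ (p : I) (β : J), γ p * Λ β
      = ∑ q, ∑ r, ((∑ a, -(1/8) * G a r * C (Sum.inr β) (Sum.inl q) (Sum.inl a))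
          - (∑ a, -(1/8) * G a q * C (Sum.inr β) (Sum.inl r) (Sum.inl a)))
        • (γ p * (γ q * γ r)) := by
    intro p β
    rw [hΛ β]
    calc γ p * ∑ a, ∑ b, ∑ c, (-(1/8) * G a c * C (Sum.inr β) (Sum.inl b) (Sum.inl a)) •
            (γ b * γ c - γ c * γ b)
        = ∑ a, ∑ b, ∑ c, ((-(1/8) * G a c * C (Sum.inr β) (Sum.inl b) (Sum.inl a)) •
            (γ p * (γ b * γ c)) - (-(1/8) * G a c * C (Sum.inr β) (Sum.inl b) (Sum.inl a)) •
            (γ p * (γ c * γ b))) := by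
          rw [Finset.mul_sum]
          refine Finset.sum_congr rfl fun a _ => ?_
          rw [Finset.mul_sum]
          refine Finset.sum_congr rfl fun b _ => ?_
          rw [Finset.mul_sum]
          refine Finset.sum_congr rfl fun c _ => ?_
          rw [mul_smul_comm, mul_sub, smul_sub]
      _ = (∑ a, ∑ b, ∑ c, (-(1/8) * G a c * C (Sum.inr β) (Sum.inl b) (Sum.inl a)) •
            (γ p * (γ b * γ c)))
          - (∑ a, ∑ b, ∑ c, (-(1/8) * G a c * C (Sum.inr β) (Sum.inl b) (Sum.inl a)) •
            (γ p * (γ c * γ b))) := by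
          simp only [Finset.sum_sub_distrib]
      _ = (∑ a, ∑ b, ∑ c, (-(1/8) * G a c * C (Sum.inr β) (Sum.inl b) (Sum.inl a)) •
            (γ p * (γ b * γ c)))
          - (∑ a, ∑ b, ∑ c, (-(1/8) * G a b * C (Sum.inr β) (Sum.inl c) (Sum.inl a)) •
            (γ p * (γ b * γ c))) := by
          congr 1
          exact Finset.sum_congr rfl fun a _ => Finset.sum_comm
      _ = ∑ a, ∑ b, ∑ c, ((-(1/8) * G a c * C (Sum.inr β) (Sum.inl b) (Sum.inl a))
            - (-(1/8) * G a b * C (Sum.inr β) (Sum.inl c) (Sum.inl a))) •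
            (γ p * (γ b * γ c)) := by
          simp only [← Finset.sum_sub_distrib, sub_smul]
      _ = ∑ b, ∑ c, ∑ a, ((-(1/8) * G a c * C (Sum.inr β) (Sum.inl b) (Sum.inl a))
            - (-(1/8) * G a b * C (Sum.inr β) (Sum.inl c) (Sum.inl a))) •
            (γ p * (γ b * γ c)) := Spin19.reindex3s _
      _ = ∑ q, ∑ r, ((∑ a, -(1/8) * G a r * C (Sum.inr β) (Sum.inl q) (Sum.inl a))
          - (∑ a, -(1/8) * G a q * C (Sum.inr β) (Sum.inl r) (Sum.inl a)))
          • (γ p * (γ q * γ r)) := by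
          refine Finset.sum_congr rfl fun q _ => Finset.sum_congr rfl fun r _ => ?_
          rw [← Finset.sum_sub_distrib, Finset.sum_smul]
  have rhs_exp : (∑ a, ∑ β : J, C (Sum.inl a) (Sum.inr α) (Sum.inr β) • (γ a * Λ β))
      = ∑ p, ∑ q, ∑ r, (∑ β, C (Sum.inl p) (Sum.inr α) (Sum.inr β) *
          ((∑ a, -(1/8) * G a r * C (Sum.inr β) (Sum.inl q) (Sum.inl a))
            - (∑ a, -(1/8) * G a q * C (Sum.inr β) (Sum.inl r) (Sum.inl a))))
        • (γ p * (γ q * γ r)) := by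
    refine Finset.sum_congr rfl fun p _ => ?_
    calc ∑ β : J, C (Sum.inl p) (Sum.inr α) (Sum.inr β) • (γ p * Λ β)
        = ∑ β : J, ∑ q, ∑ r, (C (Sum.inl p) (Sum.inr α) (Sum.inr β) *
            ((∑ a, -(1/8) * G a r * C (Sum.inr β) (Sum.inl q) (Sum.inl a))
              - (∑ a, -(1/8) * G a q * C (Sum.inr β) (Sum.inl r) (Sum.inl a))))
            • (γ p * (γ q * γ r)) := by
          refine Finset.sum_congr rfl fun β _ => ?_
          rw [gMul p β, Finset.smul_sum]
          refine Finset.sum_congr rfl fun q _ => ?_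
          rw [Finset.smul_sum]
          exact Finset.sum_congr rfl fun r _ => by rw [smul_smul]
      _ = ∑ q, ∑ r, ∑ β : J, (C (Sum.inl p) (Sum.inr α) (Sum.inr β) *
            ((∑ a, -(1/8) * G a r * C (Sum.inr β) (Sum.inl q) (Sum.inl a))
              - (∑ a, -(1/8) * G a q * C (Sum.inr β) (Sum.inl r) (Sum.inl a))))
            • (γ p * (γ q * γ r)) := Spin19.reindexJ _
      _ = _ := Finset.sum_congr rfl fun q _ => Finset.sum_congr rfl fun r _ =>
            (Finset.sum_smul).symm
  rw [rhs_exp]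
  -- Final : combine and apply the scalar identity
  simp only [← Finset.sum_add_distrib]
  refine Finset.sum_congr rfl fun p _ => Finset.sum_congr rfl fun q _ =>
    Finset.sum_congr rfl fun r _ => ?_
  have key := Spin19.keyScalar C G α Ginv hanti hjac hsub hGsym hGinv hAdH Γc hΓc p q r
  calc (∑ a, (∑ d, (-(1/4) * Γc d q a * G d r))
          * C (Sum.inr α) (Sum.inl p) (Sum.inl a)) • (γ p * (γ q * γ r))
        + ((∑ a, (∑ d, (-(1/4) * Γc d a p * G d r))
          * C (Sum.inr α) (Sum.inl q) (Sum.inl a)) • (γ p * (γ q * γ r))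
        + (∑ a, (∑ d, (-(1/4) * Γc d q p * G d a))
          * C (Sum.inr α) (Sum.inl r) (Sum.inl a)) • (γ p * (γ q * γ r)))
      = ((∑ a, (∑ d, (-(1/4) * Γc d q a * G d r))
          * C (Sum.inr α) (Sum.inl p) (Sum.inl a))
        + (∑ a, (∑ d, (-(1/4) * Γc d a p * G d r))
          * C (Sum.inr α) (Sum.inl q) (Sum.inl a))
        + (∑ a, (∑ d, (-(1/4) * Γc d q p * G d a))
          * C (Sum.inr α) (Sum.inl r) (Sum.inl a))) • (γ p * (γ q * γ r)) := by
        module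
    _ = _ := by rw [key]
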